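/- Let A and A' be p×q (0,1)-matrices with equal row sums and equal column sums such that A' is reachable from A by a finite sequence of positive switches. Then there exists a unique matrix T ∈ M_{(p−1)×(q−1)}(ℕ) with nonnegative integer entries such that A' − A = Σ_{i,k} t_{ik} C_{i,i+1,k,k+1}. -/

import Mathlib

/-- The switching matrix `C_{i,j,k,l}`. -/
def switchMatrix {p q : ℕ} (i j : Fin p) (k l : Fin q) : Matrix (Fin p) (Fin q) ℤ :=
  Matrix.single i k 1 + Matrix.single j l 1
    - Matrix.single i l 1 - Matrix.single j k 1

/-- The unitary switching matrix `C_{i,i+1,k,k+1}`, for `(i,k) ∈ Fin n × Fin m`. -/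
def unitarySwitch {n m : ℕ} (i : Fin n) (k : Fin m) : Matrix (Fin (n + 1)) (Fin (m + 1)) ℤ :=
  switchMatrix i.castSucc i.succ k.castSucc k.succ

/-- `A` is a (0,1)-matrix. -/
def IsBinary {p q : ℕ} (A : Matrix (Fin p) (Fin q) ℤ) : Prop :=
  ∀ r s, A r s = 0 ∨ A r s = 1

/-- `A'` is obtained from the (0,1)-matrix `A` by a positive switch. -/
def PosSwitch {p q : ℕ} (A A' : Matrix (Fin p) (Fin q) ℤ) : Prop :=
  IsBinary A ∧ ∃ (i j : Fin p) (k l : Fin q), i < j ∧ k < l ∧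
    A i k = 0 ∧ A j l = 0 ∧ A i l = 1 ∧ A j k = 1 ∧ A' = A + switchMatrix i j k l

section Aux

lemma stdBasis_apply' {p q : ℕ} (i : Fin p) (k : Fin q) (x : Fin p) (y : Fin q) :
    Matrix.single i k (1:ℤ) x y = if i = x ∧ k = y then 1 else 0 := rfl

lemma ite_and_one' {P Q : Prop} [Decidable P] [Decidable Q] :
    (if P ∧ Q then (1:ℤ) else 0) = (if P then 1 else 0) * (if Q then 1 else 0) := by
  by_cases hP : P <;> by_cases hQ : Q <;> simp [hP, hQ]

lemma switch_apply' {p q : ℕ} (a b : Fin p) (c d : Fin q) (x : Fin p) (y : Fin q) :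
    switchMatrix a b c d x y =
      ((if a = x then (1:ℤ) else 0) - if b = x then 1 else 0) *
      ((if c = y then (1:ℤ) else 0) - if d = y then 1 else 0) := by
  simp only [switchMatrix, Matrix.sub_apply, Matrix.add_apply, stdBasis_apply', ite_and_one']
  ring

lemma unitary_apply' {n m : ℕ} (i : Fin n) (k : Fin m) (x : Fin (n+1)) (y : Fin (m+1)) :
    unitarySwitch i k x y =
      ((if i.castSucc = x then (1:ℤ) else 0) - if i.succ = x then 1 else 0) *
      ((if k.castSucc = y then (1:ℤ) else 0) - if k.succ = y then 1 else 0) :=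
  switch_apply' _ _ _ _ _ _

lemma sum_cs' {N : ℕ} (x : Fin (N+1)) (c : Fin N → ℤ) :
    (∑ i : Fin N, if i.castSucc = x then c i else 0) =
    if h : (x:ℕ) < N then c ⟨x, h⟩ else 0 := by
  split_ifs with h
  · rw [Finset.sum_eq_single ⟨(x:ℕ), h⟩]
    · simp [Fin.ext_iff]
    · intro i _ hi
      rw [if_neg]
      have hv : ((⟨(x:ℕ), h⟩ : Fin N) : ℕ) = (x:ℕ) := rfl
      simp only [Fin.ext_iff, Fin.coe_castSucc, hv] at hi ⊢
      omega
    · simp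
  · apply Finset.sum_eq_zero
    intro i _
    rw [if_neg]
    simp only [Fin.ext_iff, Fin.coe_castSucc]
    omega

lemma sum_sc' {N : ℕ} (x : Fin (N+1)) (c : Fin N → ℤ) :
    (∑ i : Fin N, if i.succ = x then c i else 0) =
    if h : 0 < (x:ℕ) then c ⟨(x:ℕ)-1, by have := x.isLt; omega⟩ else 0 := by
  split_ifs with h
  · have hlt : (x:ℕ)-1 < N := by have := x.isLt; omega
    rw [Finset.sum_eq_single ⟨(x:ℕ)-1, hlt⟩]
    · rw [if_pos]
      simp only [Fin.ext_iff, Fin.val_succ]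
      omega
    · intro i _ hi
      rw [if_neg]
      have hv : ((⟨(x:ℕ)-1, hlt⟩ : Fin N) : ℕ) = (x:ℕ)-1 := rfl
      simp only [Fin.ext_iff, Fin.val_succ, hv] at hi ⊢
      omega
    · simp
  · apply Finset.sum_eq_zero
    intro i _
    rw [if_neg]
    simp only [Fin.ext_iff, Fin.val_succ]
    omega

lemma tele' {N : ℕ} (a b x : Fin (N+1)) (hab : a < b) :
    ∑ i : Fin N, (if a ≤ i.castSucc ∧ i.succ ≤ b then (1:ℤ) else 0) *
      ((if i.castSucc = x then 1 else 0) - (if i.succ = x then 1 else 0)) =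
    (if a = x then 1 else 0) - (if b = x then 1 else 0) := by
  simp only [mul_sub, mul_ite, mul_one, mul_zero, Finset.sum_sub_distrib]
  rw [sum_cs' x (fun i => if a ≤ i.castSucc ∧ i.succ ≤ b then (1:ℤ) else 0),
      sum_sc' x (fun i => if a ≤ i.castSucc ∧ i.succ ≤ b then (1:ℤ) else 0)]
  have hb := b.isLt
  have hx := x.isLt
  rw [Fin.lt_def] at hab
  simp only [Fin.le_def, Fin.ext_iff, Fin.coe_castSucc, Fin.val_succ]
  split_ifs <;> omega

lemma half' {N : ℕ} (A : Fin (N+1)) (i : Fin N) :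
    ∑ x : Fin (N+1), (if x ≤ A then (1:ℤ) else 0) *
      ((if i.castSucc = x then 1 else 0) - (if i.succ = x then 1 else 0)) =
    (if i.castSucc ≤ A then 1 else 0) - (if i.succ ≤ A then 1 else 0) := by
  simp only [mul_sub, mul_ite, mul_one, mul_zero, Finset.sum_sub_distrib]
  rw [Finset.sum_ite_eq, Finset.sum_ite_eq]
  simp

/-- The partial-sum linear map `M ↦ ∑_{x ≤ a, y ≤ b} M x y`. -/
def pSumMap {n m : ℕ} (a : Fin n) (b : Fin m) :
    Matrix (Fin (n+1)) (Fin (m+1)) ℤ →ₗ[ℤ] ℤ where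
  toFun M := ∑ x, ∑ y, if x ≤ a.castSucc ∧ y ≤ b.castSucc then M x y else 0
  map_add' := by
    intro M N
    rw [← Finset.sum_add_distrib]
    refine Finset.sum_congr rfl fun x _ => ?_
    rw [← Finset.sum_add_distrib]
    refine Finset.sum_congr rfl fun y _ => ?_
    by_cases h : x ≤ a.castSucc ∧ y ≤ b.castSucc <;> simp [h, Matrix.add_apply]
  map_smul' := by
    intro c M
    simp only [RingHom.id_apply, smul_eq_mul]
    rw [Finset.mul_sum]
    refine Finset.sum_congr rfl fun x _ => ?_
    rw [Finset.mul_sum]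
    refine Finset.sum_congr rfl fun y _ => ?_
    by_cases h : x ≤ a.castSucc ∧ y ≤ b.castSucc <;> simp [h, Matrix.smul_apply]

lemma pSum_U' {n m : ℕ} (i a : Fin n) (k b : Fin m) :
    pSumMap a b (unitarySwitch i k) = if i = a ∧ k = b then 1 else 0 := by
  show (∑ x, ∑ y, if x ≤ a.castSucc ∧ y ≤ b.castSucc then unitarySwitch i k x y else 0) = _
  have key : ∀ (x : Fin (n+1)) (y : Fin (m+1)),
      (if x ≤ a.castSucc ∧ y ≤ b.castSucc then unitarySwitch i k x y else 0) =
      ((if x ≤ a.castSucc then (1:ℤ) else 0) *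
        ((if i.castSucc = x then 1 else 0) - (if i.succ = x then 1 else 0))) *
      ((if y ≤ b.castSucc then (1:ℤ) else 0) *
        ((if k.castSucc = y then 1 else 0) - (if k.succ = y then 1 else 0))) := by
    intro x y
    rw [unitary_apply']
    by_cases h1 : x ≤ a.castSucc <;> by_cases h2 : y ≤ b.castSucc <;>
      simp [h1, h2] <;> ring
  simp only [key]
  rw [← Finset.sum_mul_sum, half', half']
  have h1 := a.isLt
  have h2 := b.isLt
  simp only [Fin.le_def, Fin.ext_iff, Fin.coe_castSucc, Fin.val_succ]
  split_ifs <;> omega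

lemma extract' {n m : ℕ} (T : Fin n → Fin m → ℤ) (a : Fin n) (b : Fin m) :
    pSumMap a b (∑ i : Fin n, ∑ k : Fin m, T i k • unitarySwitch i k) = T a b := by
  rw [map_sum]
  simp only [map_sum, LinearMap.map_smul, smul_eq_mul, pSum_U']
  simp only [mul_ite, mul_one, mul_zero, ite_and]
  rw [Finset.sum_eq_single a]
  · rw [Finset.sum_eq_single b]
    · simp
    · intro k' _ hk'
      simp [hk']
    · simp
  · intro i' _ hi'
    apply Finset.sum_eq_zero
    intro k' _
    simp [hi']
  · simp

lemma switch_decomp' {n m : ℕ} (a b : Fin (n+1)) (c d : Fin (m+1)) (hab : a < b) (hcd : c < d) :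
    switchMatrix a b c d = ∑ i : Fin n, ∑ k : Fin m,
      (if a ≤ i.castSucc ∧ i.succ ≤ b ∧ c ≤ k.castSucc ∧ k.succ ≤ d then (1:ℤ) else 0) •
        unitarySwitch i k := by
  ext x y
  simp only [Matrix.sum_apply, Matrix.smul_apply, smul_eq_mul]
  have key : ∀ (i : Fin n) (k : Fin m),
      (if a ≤ i.castSucc ∧ i.succ ≤ b ∧ c ≤ k.castSucc ∧ k.succ ≤ d then (1:ℤ) else 0) *
        unitarySwitch i k x y =
      ((if a ≤ i.castSucc ∧ i.succ ≤ b then (1:ℤ) else 0) *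
        ((if i.castSucc = x then 1 else 0) - (if i.succ = x then 1 else 0))) *
      ((if c ≤ k.castSucc ∧ k.succ ≤ d then (1:ℤ) else 0) *
        ((if k.castSucc = y then 1 else 0) - (if k.succ = y then 1 else 0))) := by
    intro i k
    rw [unitary_apply']
    by_cases h1 : a ≤ i.castSucc ∧ i.succ ≤ b <;>
      by_cases h2 : c ≤ k.castSucc ∧ k.succ ≤ d <;>
      simp [h1, h2, and_assoc] <;> ring
  simp only [key]
  rw [← Finset.sum_mul_sum, tele' a b x hab, tele' c d y hcd, switch_apply']

lemma exists_int' {n m : ℕ} (A A' : Matrix (Fin (n+1)) (Fin (m+1)) ℤ)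
    (hreach : Relation.ReflTransGen PosSwitch A A') :
    ∃ T : Fin n → Fin m → ℤ, (∀ i k, 0 ≤ T i k) ∧
      A' - A = ∑ i : Fin n, ∑ k : Fin m, T i k • unitarySwitch i k := by
  induction hreach with
  | refl =>
    exact ⟨0, fun _ _ => le_refl 0, by simp⟩
  | @tail B C h hstep ih =>
    obtain ⟨T, hT0, hT⟩ := ih
    obtain ⟨-, i, j, k, l, hij, hkl, -, -, -, -, hC⟩ := hstep
    refine ⟨fun i' k' => T i' k' +
      (if i ≤ i'.castSucc ∧ i'.succ ≤ j ∧ k ≤ k'.castSucc ∧ k'.succ ≤ l then 1 else 0),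
      fun i' k' => by have := hT0 i' k'; dsimp only; split_ifs <;> omega, ?_⟩
    have hsum : (∑ i' : Fin n, ∑ k' : Fin m, (T i' k' +
        (if i ≤ i'.castSucc ∧ i'.succ ≤ j ∧ k ≤ k'.castSucc ∧ k'.succ ≤ l then (1:ℤ) else 0))
          • unitarySwitch i' k') =
        (∑ i' : Fin n, ∑ k' : Fin m, T i' k' • unitarySwitch i' k') +
        (∑ i' : Fin n, ∑ k' : Fin m,
          (if i ≤ i'.castSucc ∧ i'.succ ≤ j ∧ k ≤ k'.castSucc ∧ k'.succ ≤ l then (1:ℤ) else 0)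
            • unitarySwitch i' k') := by
      simp [add_smul, Finset.sum_add_distrib]
    rw [hC, hsum, ← hT, ← switch_decomp' i j k l hij hkl]
    abel

end Aux

/-- if `A'` is reachable from `A` by a finite sequence of positive switches,
then `A' - A` is a sum of unitary switching matrices with unique nonnegative integer
coefficients. -/
theorem stmt6 {n m : ℕ} (A A' : Matrix (Fin (n + 1)) (Fin (m + 1)) ℤ)
    (hA : IsBinary A) (hA' : IsBinary A')
    (hrow : ∀ i, ∑ k, A i k = ∑ k, A' i k) (hcol : ∀ k, ∑ i, A i k = ∑ i, A' i k)
    (hreach : Relation.ReflTransGen PosSwitch A A') :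
    ∃! T : Fin n → Fin m → ℕ,
      A' - A = ∑ i : Fin n, ∑ k : Fin m, (T i k : ℤ) • unitarySwitch i k := by
  obtain ⟨T, hT0, hT⟩ := exists_int' A A' hreach
  have hcast : ∀ i k, (((T i k).toNat : ℕ) : ℤ) = T i k := fun i k =>
    Int.toNat_of_nonneg (hT0 i k)
  refine ⟨fun i k => (T i k).toNat, ?_, ?_⟩
  · simp only [hcast]
    exact hT
  · intro T2 hT2
    funext i k
    have e1 : pSumMap i k (A' - A) = (T2 i k : ℤ) := by
      rw [hT2]; exact extract' _ i k
    have e2 : pSumMap i k (A' - A) = T i k := by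
      rw [hT]; exact extract' _ i k
    have e3 : (T2 i k : ℤ) = ((T i k).toNat : ℤ) := by
      rw [hcast]; exact e1.symm.trans e2
    exact_mod_cast e3
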